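/- Let x and y be p-strings both starting with p-symbols (fce(x), fce(y) ∉ Σs), with ⟨x[2..]⟩ < ⟨y[2..]⟩, and let e = lcp∞(⟨x[2..]⟩,⟨y[2..]⟩). If fce(x) = fce(y) ≤ e, then ⟨x⟩ < ⟨y⟩, lcp(⟨x⟩,⟨y⟩) = lcp(⟨x[2..]⟩,⟨y[2..]⟩)+1 and lcp∞(⟨x⟩,⟨y⟩) = e. -/

import Mathlib

/-- Symbols of a parameterized string: static symbols `s a` (from Σs) and
parameter symbols `p a` (from Σp). -/
inductive PSym where
  | s : ℕ → PSym
  | p : ℕ → PSym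
deriving DecidableEq

/-- Symbols of a p-encoded string: static symbols, finite distances, and ∞. -/
inductive Enc where
  | s : ℕ → Enc
  | fin : ℕ → Enc
  | inf : Enc
deriving DecidableEq

/-- Order embedding: static symbols < natural numbers < ∞. -/
def Enc.toPair : Enc → ℕ ×ₗ ℕ
  | .s a => toLex (0, a)
  | .fin d => toLex (1, d)
  | .inf => toLex (2, 0)

instance : LinearOrder Enc :=
  LinearOrder.lift' Enc.toPair (by
    rintro (a | a | _) (b | b | _) h <;>
      simp_all [Enc.toPair, toLex_inj, Prod.ext_iff])

/-- Largest position `j < i` (0-based) carrying the same symbol as position `i`. -/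
def prevOcc (w : List PSym) (i : ℕ) : Option ℕ :=
  ((List.range i).filter (fun j => w[j]? = w[i]?)).max?

/-- The p-encoding of position `i` (0-based) of `w`. -/
def pencSym (w : List PSym) (i : ℕ) : Enc :=
  match w[i]? with
  | some (PSym.s a) => Enc.s a
  | some (PSym.p _) =>
    match prevOcc w i with
    | some j => Enc.fin (i - j)
    | none => Enc.inf
  | none => Enc.inf

/-- The p-encoding ⟨w⟩ of a p-string `w`. -/
def penc (w : List PSym) : List Enc :=
  (List.range w.length).map (pencSym w)

/-- Lexicographic (strict) order on p-encoded strings. -/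
def lexLt (x y : List Enc) : Prop := List.Lex (· < ·) x y

def lexLe (x y : List Enc) : Prop := lexLt x y ∨ x = y

/-- Length of the longest common prefix. -/
def lcp {α : Type*} [DecidableEq α] : List α → List α → ℕ
  | a :: x, b :: y => if a = b then lcp x y + 1 else 0
  | _, _ => 0

/-- Number of ∞'s in the longest common prefix of two p-encoded strings. -/
def lcpInf (x y : List Enc) : ℕ := (x.take (lcp x y)).count Enc.inf

/-- Number of distinct p-symbols occurring in `w` (denoted |w|_p). -/
def distinctP (w : List PSym) : ℕ :=
  (w.filterMap (fun s => match s with | PSym.p a => some a | PSym.s _ => none)).dedup.length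

/-- For `w` starting with a p-symbol: the rank of `w[1]` among the distinct
p-symbols of `w[1..h+1]`, where `h+1 = min{|w|, second occurrence of w[1] in w}`. -/
def fceRank (w : List PSym) : ℕ :=
  match w with
  | [] => 0
  | c :: rest => distinctP ((c :: rest).take (min (c :: rest).length (2 + rest.idxOf c)))

/-- The function fce from the paper; `fce ε = $` is modelled as `Enc.s 0`. -/
def fce (w : List PSym) : Enc :=
  match w with
  | [] => Enc.s 0
  | PSym.s a :: _ => Enc.s a
  | w => Enc.fin (fceRank w)


theorem prevOcc_eq_none_iff (w : List PSym) (i : ℕ) :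
    prevOcc w i = none ↔ ∀ j < i, w[j]? ≠ w[i]? := by
  simp [prevOcc, List.max?_eq_none_iff, List.filter_eq_nil_iff, List.mem_range]

theorem prevOcc_eq_some_iff (w : List PSym) (i j : ℕ) :
    prevOcc w i = some j ↔ (j < i ∧ w[j]? = w[i]?) ∧ ∀ m < i, w[m]? = w[i]? → m ≤ j := by
  rw [prevOcc, List.max?_eq_some_iff']
  simp only [List.mem_filter, List.mem_range, decide_eq_true_eq]
  tauto

theorem prevOcc_zero (w : List PSym) : prevOcc w 0 = none := by
  simp [prevOcc]

theorem prevOcc_cons (c : PSym) (l : List PSym) (i : ℕ) :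
    prevOcc (c :: l) (i + 1) =
      match prevOcc l i with
      | some j => some (j + 1)
      | none => if l[i]? = some c then some 0 else none := by
  rcases h : prevOcc l i with _ | j
  · have h' := h
    rw [prevOcc_eq_none_iff] at h
    simp only [h']
    by_cases hc : l[i]? = some c
    · rw [if_pos hc]
      rw [prevOcc_eq_some_iff]
      refine ⟨⟨Nat.succ_pos i, ?_⟩, ?_⟩
      · simp [hc]
      · rintro (_ | m) hm heq
        · exact le_refl 0
        · exfalso
          rw [List.getElem?_cons_succ, List.getElem?_cons_succ] at heq
          exact h m (by omega) heq
    · rw [if_neg hc]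
      rw [prevOcc_eq_none_iff]
      rintro (_ | m) hm heq
      · rw [List.getElem?_cons_succ] at heq
        exact hc ((by simpa using heq.symm))
      · rw [List.getElem?_cons_succ, List.getElem?_cons_succ] at heq
        exact h m (by omega) heq
  · simp only [h]
    rw [prevOcc_eq_some_iff] at h
    obtain ⟨⟨hji, heq⟩, hmax⟩ := h
    rw [prevOcc_eq_some_iff]
    refine ⟨⟨by omega, by simpa using heq⟩, ?_⟩
    rintro (_ | m) hm hme
    · omega
    · rw [List.getElem?_cons_succ, List.getElem?_cons_succ] at hme
      exact Nat.succ_le_succ (hmax m (by omega) hme)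

theorem pencSym_p_zero (a : ℕ) (l : List PSym) : pencSym (PSym.p a :: l) 0 = Enc.inf := by
  simp [pencSym, prevOcc_zero]

theorem pencSym_cons_s (a : ℕ) (l : List PSym) (i : ℕ) :
    pencSym (PSym.s a :: l) (i + 1) = pencSym l i := by
  unfold pencSym
  rw [List.getElem?_cons_succ, prevOcc_cons]
  rcases h : l[i]? with _ | (b | b) <;> simp only [h]
  · rcases hp : prevOcc l i with _ | j <;> simp only [hp]
    · simp [h]
    · simp [Nat.succ_sub_succ]

theorem pencSym_cons_p_first (a : ℕ) (l : List PSym) (i : ℕ)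
    (h1 : l[i]? = some (PSym.p a)) (h2 : prevOcc l i = none) :
    pencSym (PSym.p a :: l) (i + 1) = Enc.fin (i + 1) := by
  unfold pencSym
  rw [List.getElem?_cons_succ, prevOcc_cons, h1, h2]
  simp

theorem pencSym_cons_p_ne (a : ℕ) (l : List PSym) (i : ℕ)
    (h : ¬(l[i]? = some (PSym.p a) ∧ prevOcc l i = none)) :
    pencSym (PSym.p a :: l) (i + 1) = pencSym l i := by
  unfold pencSym
  rw [List.getElem?_cons_succ, prevOcc_cons]
  rcases hh : l[i]? with _ | (b | b) <;> simp only [hh]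
  · rcases hp : prevOcc l i with _ | j <;> simp only [hp]
    · have : ¬ (PSym.p b = PSym.p a) := by
        intro he; exact h ⟨by rw [hh, he], hp⟩
      simp [hh, this]
    · simp [Nat.succ_sub_succ]

theorem penc_length (l : List PSym) : (penc l).length = l.length := by simp [penc]

theorem penc_getElem (l : List PSym) (i : ℕ) (h : i < (penc l).length) :
    (penc l)[i] = pencSym l i := by
  simp [penc]

theorem indexOf_min {α : Type*} [DecidableEq α] :
    ∀ (l : List α) (a : α) (j : ℕ), l[j]? = some a → l.idxOf a ≤ j := by
  intro l
  induction l with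
  | nil => intro a j h; simp at h
  | cons b l ih =>
    intro a j h
    rcases j with _ | j
    · simp at h
      simp [h, List.idxOf_cons_self]
    · rw [List.getElem?_cons_succ] at h
      by_cases hb : b = a
      · simp [hb, List.idxOf_cons_self]
      · rw [List.idxOf_cons_ne _ hb]
        exact Nat.succ_le_succ (ih a j h)

theorem prevOcc_indexOf (l : List PSym) (c : PSym) (h : c ∈ l) :
    prevOcc l (l.idxOf c) = none := by
  rw [prevOcc_eq_none_iff]
  intro j hj heq
  have hlt : l.idxOf c < l.length := List.idxOf_lt_length_iff.2 h
  rw [List.getElem?_eq_getElem hlt, List.getElem_idxOf hlt] at heq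
  exact absurd (indexOf_min l c j heq) (by omega)

theorem pencSym_inf (l : List PSym) (a : ℕ) (i : ℕ)
    (h1 : l[i]? = some (PSym.p a)) (h2 : prevOcc l i = none) :
    pencSym l i = Enc.inf := by
  unfold pencSym
  rw [h1, h2]

theorem penc_cons_s (a : ℕ) (l : List PSym) : penc (PSym.s a :: l) = Enc.s a :: penc l := by
  apply List.ext_getElem
  · simp [penc_length]
  · intro n h1 h2
    rcases n with _ | n
    · rw [penc_getElem]
      simp [pencSym, prevOcc_zero]
    · rw [penc_getElem, pencSym_cons_s]
      rw [List.getElem_cons_succ, penc_getElem]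

theorem penc_cons_p (a : ℕ) (l : List PSym) :
    penc (PSym.p a :: l) =
      Enc.inf :: (penc l).set (l.idxOf (PSym.p a)) (Enc.fin (l.idxOf (PSym.p a) + 1)) := by
  apply List.ext_getElem
  · simp [penc_length]
  · intro n h1 h2
    rcases n with _ | n
    · rw [penc_getElem]
      simp [pencSym_p_zero]
    · rw [penc_getElem, List.getElem_cons_succ, List.getElem_set]
      by_cases hn : l.idxOf (PSym.p a) = n
      · rw [if_pos hn]
        subst hn
        have hlen : List.idxOf (PSym.p a) l < l.length := by
          simp [penc_length] at h1; omega
        have hmem : PSym.p a ∈ l := List.idxOf_lt_length_iff.1 hlen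
        have hg : l[List.idxOf (PSym.p a) l]? = some (PSym.p a) := by
          rw [List.getElem?_eq_getElem hlen, List.getElem_idxOf hlen]
        rw [pencSym_cons_p_first a l _ hg (prevOcc_indexOf l _ hmem)]
      · rw [if_neg hn]
        rw [pencSym_cons_p_ne, penc_getElem]
        rintro ⟨hg, hpo⟩
        have hle := indexOf_min l (PSym.p a) n hg
        have hlt : l.idxOf (PSym.p a) < n := lt_of_le_of_ne hle hn
        rw [prevOcc_eq_none_iff] at hpo
        have hlen : n < l.length := by simp [penc_length] at h1; omega
        have hg2 : l[l.idxOf (PSym.p a)]? = some (PSym.p a) := by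
          have h3 : l.idxOf (PSym.p a) < l.length := by omega
          rw [List.getElem?_eq_getElem h3, List.getElem_idxOf h3]
        exact hpo _ hlt (by rw [hg2, hg])

theorem penc_take (l : List PSym) (j : ℕ) : (penc l).take j = penc (l.take j) := by
  apply List.ext_getElem
  · simp [penc_length]
  · intro n h1 h2
    simp only [List.length_take, penc_length, lt_min_iff] at h1
    rw [List.getElem_take, penc_getElem, penc_getElem]
    have hgeq : ∀ m ≤ n, (l.take j)[m]? = l[m]? := by
      intro m hm
      simp only [List.getElem?_take]
      rw [if_pos (by omega : m < j)]
    have hpo : prevOcc (l.take j) n = prevOcc l n := by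
      unfold prevOcc
      rw [hgeq n le_rfl]
      congr 1
      apply List.filter_congr
      intro m hm
      rw [List.mem_range] at hm
      rw [hgeq m (by omega)]
    unfold pencSym
    rw [hgeq n le_rfl, hpo]

theorem penc_getElem? (l : List PSym) (i : ℕ) (h : i < l.length) :
    (penc l)[i]? = some (pencSym l i) := by
  rw [List.getElem?_eq_getElem (by rw [penc_length]; exact h), penc_getElem]

def pf : PSym → Option ℕ := fun s => match s with | PSym.p a => some a | PSym.s _ => none

theorem distinctP_eq (w : List PSym) : distinctP w = (w.filterMap pf).toFinset.card := by
  rw [distinctP, List.card_toFinset]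
  rfl

theorem mem_params (a : ℕ) (l : List PSym) : a ∈ l.filterMap pf ↔ PSym.p a ∈ l := by
  rw [List.mem_filterMap]
  constructor
  · rintro ⟨c, hc, hf⟩
    rcases c with b | b <;> simp [pf] at hf
    rwa [hf] at hc
  · intro h; exact ⟨PSym.p a, h, rfl⟩

theorem params_cons_s (a : ℕ) (l : List PSym) :
    (PSym.s a :: l).filterMap pf = l.filterMap pf := by rfl

theorem params_cons_p (a : ℕ) (l : List PSym) :
    (PSym.p a :: l).filterMap pf = a :: l.filterMap pf := by simp [pf]

theorem distinctP_cons_s (a : ℕ) (l : List PSym) : distinctP (PSym.s a :: l) = distinctP l := by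
  rw [distinctP_eq, distinctP_eq, params_cons_s]

theorem distinctP_cons_p_mem (a : ℕ) (l : List PSym) (h : PSym.p a ∈ l) :
    distinctP (PSym.p a :: l) = distinctP l := by
  rw [distinctP_eq, distinctP_eq, params_cons_p, List.toFinset_cons,
    Finset.insert_eq_self.2 (by rw [List.mem_toFinset, mem_params]; exact h)]

theorem distinctP_cons_p_not_mem (a : ℕ) (l : List PSym) (h : PSym.p a ∉ l) :
    distinctP (PSym.p a :: l) = distinctP l + 1 := by
  rw [distinctP_eq, distinctP_eq, params_cons_p, List.toFinset_cons,
    Finset.card_insert_of_notMem (by rw [List.mem_toFinset, mem_params]; exact h)]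

theorem count_set_inf (L : List Enc) (j m : ℕ) (hj : j < L.length) (hL : L[j] = Enc.inf) :
    (L.set j (Enc.fin m)).count Enc.inf + 1 = L.count Enc.inf := by
  have h1 : L = L.take j ++ L[j] :: L.drop (j + 1) := by
    rw [List.getElem_cons_drop, List.take_append_drop]
  have hlt : (L.take j).length = j := by simp; omega
  conv_rhs => rw [h1]
  conv_lhs => rw [h1]
  rw [List.set_append, if_neg (by omega)]
  rw [hlt, Nat.sub_self, List.set_cons_zero]
  rw [List.count_append, List.count_append, List.count_cons, List.count_cons, hL]
  simp
  omega

theorem count_inf_penc (l : List PSym) : (penc l).count Enc.inf = distinctP l := by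
  induction l with
  | nil => rfl
  | cons c l ih =>
    rcases c with a | a
    · rw [penc_cons_s, List.count_cons, distinctP_cons_s, ← ih]
      simp
    · rw [penc_cons_p, List.count_cons]
      simp only [beq_self_eq_true, if_true]
      by_cases h : PSym.p a ∈ l
      · have hlen : l.idxOf (PSym.p a) < (penc l).length := by
          rw [penc_length]; exact List.idxOf_lt_length_iff.2 h
        have hinf : (penc l)[l.idxOf (PSym.p a)] = Enc.inf := by
          rw [penc_getElem]
          apply pencSym_inf l a
          · rw [List.getElem?_eq_getElem (by rw [penc_length] at hlen; exact hlen),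
              List.getElem_idxOf]
          · exact prevOcc_indexOf l _ h
        rw [distinctP_cons_p_mem a l h, ← ih,
          ← count_set_inf (penc l) (l.idxOf (PSym.p a)) (l.idxOf (PSym.p a) + 1) hlen hinf]
      · rw [List.set_eq_of_length_le (by rw [penc_length, List.idxOf_eq_length_iff.2 h]),
          distinctP_cons_p_not_mem a l h, ih]

theorem countInf_take (l : List PSym) (j : ℕ) :
    ((penc l).take j).count Enc.inf = distinctP (l.take j) := by
  rw [penc_take, count_inf_penc]

theorem fceRank_cons (c : PSym) (rest : List PSym) :
    fceRank (c :: rest) =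
      distinctP ((c :: rest).take (min (c :: rest).length (2 + rest.idxOf c))) := rfl

theorem fceRank_mem (a : ℕ) (l : List PSym) (h : PSym.p a ∈ l) :
    fceRank (PSym.p a :: l) = distinctP (l.take (l.idxOf (PSym.p a))) + 1 := by
  have hidx : l.idxOf (PSym.p a) < l.length := List.idxOf_lt_length_iff.2 h
  rw [fceRank_cons]
  have hmin : min (PSym.p a :: l).length (2 + l.idxOf (PSym.p a))
      = l.idxOf (PSym.p a) + 1 + 1 := by
    simp only [List.length_cons]; omega
  rw [hmin, List.take_succ_cons, List.take_succ,
    List.getElem?_eq_getElem hidx, List.getElem_idxOf hidx]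
  have hnotmem : PSym.p a ∉ l.take (l.idxOf (PSym.p a)) := by
    intro hmem
    obtain ⟨n, hn⟩ := List.mem_iff_getElem?.1 hmem
    simp only [List.getElem?_take] at hn
    by_cases hlt : n < l.idxOf (PSym.p a)
    · rw [if_pos hlt] at hn
      exact absurd (indexOf_min l _ n hn) (by omega)
    · rw [if_neg hlt] at hn; exact absurd hn (by simp)
  simp only [Option.toList_some]
  rw [distinctP_eq, distinctP_eq, params_cons_p, List.filterMap_append]
  have hsing : ([PSym.p a] : List PSym).filterMap pf = [a] := rfl
  rw [hsing]
  have hset : (a :: ((l.take (l.idxOf (PSym.p a))).filterMap pf ++ [a])).toFinset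
      = insert a ((l.take (l.idxOf (PSym.p a))).filterMap pf).toFinset := by
    ext x
    simp only [List.toFinset_cons, List.toFinset_append, Finset.mem_insert, Finset.mem_union,
      List.mem_toFinset, List.mem_singleton]
    tauto
  rw [hset, Finset.card_insert_of_notMem
    (by rw [List.mem_toFinset, mem_params]; exact hnotmem)]

theorem fceRank_not_mem (a : ℕ) (l : List PSym) (h : PSym.p a ∉ l) :
    fceRank (PSym.p a :: l) = distinctP l + 1 := by
  rw [fceRank_cons]
  have hidx : l.idxOf (PSym.p a) = l.length := List.idxOf_eq_length_iff.2 h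
  have hmin : min (PSym.p a :: l).length (2 + l.idxOf (PSym.p a)) = (PSym.p a :: l).length := by
    simp only [List.length_cons]; omega
  rw [hmin, List.take_length, distinctP_cons_p_not_mem a l h]

theorem lcp_nil_left {α : Type*} [DecidableEq α] (y : List α) : lcp [] y = 0 := by
  cases y <;> rfl

theorem lcp_nil_right {α : Type*} [DecidableEq α] (x : List α) : lcp x [] = 0 := by
  cases x <;> rfl

theorem lcp_cons {α : Type*} [DecidableEq α] (a b : α) (x y : List α) :
    lcp (a :: x) (b :: y) = if a = b then lcp x y + 1 else 0 := rfl

theorem lcp_le_length {α : Type*} [DecidableEq α] :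
    ∀ x y : List α, lcp x y ≤ x.length ∧ lcp x y ≤ y.length := by
  intro x
  induction x with
  | nil => intro y; rw [lcp_nil_left]; simp
  | cons a x ih =>
    intro y
    cases y with
    | nil => rw [lcp_nil_right]; simp
    | cons b y =>
      rw [lcp_cons]
      by_cases h : a = b
      · rw [if_pos h]; have := ih y; simp; omega
      · rw [if_neg h]; simp

theorem take_lcp_eq {α : Type*} [DecidableEq α] :
    ∀ x y : List α, x.take (lcp x y) = y.take (lcp x y) := by
  intro x
  induction x with
  | nil => intro y; rw [lcp_nil_left]; simp
  | cons a x ih =>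
    intro y
    cases y with
    | nil => rw [lcp_nil_right]; simp
    | cons b y =>
      rw [lcp_cons]
      by_cases h : a = b
      · rw [if_pos h, List.take_succ_cons, List.take_succ_cons, h, ih y]
      · rw [if_neg h]; simp

theorem lcp_append {α : Type*} [DecidableEq α] (c : List α) :
    ∀ x y : List α, lcp (c ++ x) (c ++ y) = c.length + lcp x y := by
  induction c with
  | nil => intro x y; simp
  | cons a c ih =>
    intro x y
    rw [List.cons_append, List.cons_append, lcp_cons, if_pos rfl, ih]
    simp; omega

theorem lex_cons_iff (a : Enc) (x y : List Enc) :
    lexLt (a :: x) (a :: y) ↔ lexLt x y := by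
  constructor
  · intro h
    cases h with
    | cons h => exact h
    | rel h => exact absurd h (lt_irrefl a)
  · intro h
    exact List.Lex.cons (by exact h)

theorem lexLt_append_iff (c : List Enc) : ∀ x y, lexLt (c ++ x) (c ++ y) ↔ lexLt x y := by
  induction c with
  | nil => intro x y; rfl
  | cons a c ih =>
    intro x y
    rw [List.cons_append, List.cons_append, lex_cons_iff, ih]

theorem lexLt_iff_drop :
    ∀ x y : List Enc, lexLt x y ↔ lexLt (x.drop (lcp x y)) (y.drop (lcp x y)) := by
  intro x
  induction x with
  | nil => intro y; rw [lcp_nil_left]; rfl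
  | cons a x ih =>
    intro y
    cases y with
    | nil => rw [lcp_nil_right]; rfl
    | cons b y =>
      rw [lcp_cons]
      by_cases h : a = b
      · rw [if_pos h, List.drop_succ_cons, List.drop_succ_cons, ← ih y, h, lex_cons_iff]
      · rw [if_neg h]; rfl

theorem lcp_drop_lcp {α : Type*} [DecidableEq α] :
    ∀ x y : List α, lcp (x.drop (lcp x y)) (y.drop (lcp x y)) = 0 := by
  intro x
  induction x with
  | nil => intro y; rw [lcp_nil_left]; rw [List.drop_zero, List.drop_zero, lcp_nil_left]
  | cons a x ih =>
    intro y
    cases y with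
    | nil => rw [lcp_nil_right]; rw [List.drop_zero, List.drop_zero, lcp_nil_right]
    | cons b y =>
      rw [lcp_cons]
      by_cases h : a = b
      · rw [if_pos h, List.drop_succ_cons, List.drop_succ_cons, ih y]
      · rw [if_neg h, List.drop_zero, List.drop_zero, lcp_cons, if_neg h]

/-- Case (B1): both strings start with p-symbols, ⟨x[2..]⟩ < ⟨y[2..]⟩,
e = lcp∞(⟨x[2..]⟩,⟨y[2..]⟩) and fce(x) = fce(y) ≤ e. -/
theorem stmt6 (a b : ℕ) (xs ys : List PSym)
    (hlt : lexLt (penc xs) (penc ys))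
    (e : ℕ) (he : e = lcpInf (penc xs) (penc ys))
    (heq : fceRank (PSym.p a :: xs) = fceRank (PSym.p b :: ys))
    (hle : fceRank (PSym.p a :: xs) ≤ e) :
    lexLt (penc (PSym.p a :: xs)) (penc (PSym.p b :: ys)) ∧
    lcp (penc (PSym.p a :: xs)) (penc (PSym.p b :: ys)) =
      lcp (penc xs) (penc ys) + 1 ∧
    lcpInf (penc (PSym.p a :: xs)) (penc (PSym.p b :: ys)) = e := by
  set P := penc xs with hPdef
  set Q := penc ys with hQdef
  rw [lcpInf] at he
  set L := lcp P Q with hLdef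
  set k := fceRank (PSym.p a :: xs) with hkdef
  have hLP : L ≤ P.length := (lcp_le_length P Q).1
  have hLQ : L ≤ Q.length := (lcp_le_length P Q).2
  have htake : P.take L = Q.take L := take_lcp_eq P Q
  have hmema : PSym.p a ∈ xs := by
    by_contra h
    have hc : (P.take L).count Enc.inf ≤ P.count Enc.inf :=
      (List.take_sublist L P).count_le _
    have h2 : P.count Enc.inf = distinctP xs := by rw [hPdef, count_inf_penc]
    rw [fceRank_not_mem a xs h] at hkdef
    omega
  have hmemb : PSym.p b ∈ ys := by
    by_contra h
    have hc : (Q.take L).count Enc.inf ≤ Q.count Enc.inf :=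
      (List.take_sublist L Q).count_le _
    rw [← htake] at hc
    have h2 : Q.count Enc.inf = distinctP ys := by rw [hQdef, count_inf_penc]
    rw [heq, fceRank_not_mem b ys h] at hkdef
    omega
  set jx := xs.idxOf (PSym.p a) with hjx
  set jy := ys.idxOf (PSym.p b) with hjy
  have hjxlen : jx < xs.length := List.idxOf_lt_length_iff.2 hmema
  have hjylen : jy < ys.length := List.idxOf_lt_length_iff.2 hmemb
  have hfx : k = (P.take jx).count Enc.inf + 1 := by
    rw [hkdef, fceRank_mem a xs hmema, ← countInf_take, ← hPdef, ← hjx]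
  have hfy : k = (Q.take jy).count Enc.inf + 1 := by
    rw [heq, fceRank_mem b ys hmemb, ← countInf_take, ← hQdef, ← hjy]
  have hPjx? : P[jx]? = some Enc.inf := by
    rw [hPdef, penc_getElem? xs jx hjxlen, pencSym_inf xs a jx ?_ ?_]
    · rw [hjx, List.getElem?_eq_getElem hjxlen, List.getElem_idxOf hjxlen]
    · rw [hjx]; exact prevOcc_indexOf xs _ hmema
  have hQjy? : Q[jy]? = some Enc.inf := by
    rw [hQdef, penc_getElem? ys jy hjylen, pencSym_inf ys b jy ?_ ?_]
    · rw [hjy, List.getElem?_eq_getElem hjylen, List.getElem_idxOf hjylen]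
    · rw [hjy]; exact prevOcc_indexOf ys _ hmemb
  have hsuccx : (P.take (jx + 1)).count Enc.inf = (P.take jx).count Enc.inf + 1 := by
    rw [List.take_succ, hPjx?, List.count_append]
    simp
  have hsuccy : (Q.take (jy + 1)).count Enc.inf = (Q.take jy).count Enc.inf + 1 := by
    rw [List.take_succ, hQjy?, List.count_append]
    simp
  have hjxL : jx < L := by
    by_contra hh
    push_neg at hh
    have h2 : P.take L = (P.take jx).take L := by rw [List.take_take, min_eq_left hh]
    have hc := (List.take_sublist L (P.take jx)).count_le Enc.inf
    rw [← h2] at hc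
    omega
  have hjyL : jy < L := by
    by_contra hh
    push_neg at hh
    have h2 : Q.take L = (Q.take jy).take L := by rw [List.take_take, min_eq_left hh]
    have hc := (List.take_sublist L (Q.take jy)).count_le Enc.inf
    rw [← h2, ← htake] at hc
    omega
  have hjxy : jx = jy := by
    rcases lt_trichotomy jx jy with hlt' | heq' | hgt'
    · exfalso
      have h1 : P.take (jx + 1) = Q.take (jx + 1) := by
        have h0 := congrArg (List.take (jx + 1)) htake
        rwa [List.take_take, List.take_take, min_eq_left (by omega)] at h0
      have h2 : Q.take (jx + 1) = (Q.take jy).take (jx + 1) := by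
        rw [List.take_take, min_eq_left (by omega)]
      have h3 := (List.take_sublist (jx + 1) (Q.take jy)).count_le Enc.inf
      rw [← h2, ← h1, hsuccx] at h3
      omega
    · exact heq'
    · exfalso
      have h1 : Q.take (jy + 1) = P.take (jy + 1) := by
        have h0 := congrArg (List.take (jy + 1)) htake.symm
        rwa [List.take_take, List.take_take, min_eq_left (by omega)] at h0
      have h2 : P.take (jy + 1) = (P.take jx).take (jy + 1) := by
        rw [List.take_take, min_eq_left (by omega)]
      have h3 := (List.take_sublist (jy + 1) (P.take jx)).count_le Enc.inf
      rw [← h2, ← h1, hsuccy] at h3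
      omega
  have hvx : penc (PSym.p a :: xs) = Enc.inf :: P.set jx (Enc.fin (jx + 1)) := by
    rw [penc_cons_p, ← hPdef, ← hjx]
  have hvy : penc (PSym.p b :: ys) = Enc.inf :: Q.set jx (Enc.fin (jx + 1)) := by
    rw [penc_cons_p, ← hQdef, ← hjy, ← hjxy]
  have hsplitP : P.set jx (Enc.fin (jx + 1)) =
      (P.take L).set jx (Enc.fin (jx + 1)) ++ P.drop L := by
    conv_lhs => rw [← List.take_append_drop L P]
    rw [List.set_append, if_pos (by rw [List.length_take]; omega)]
  have hsplitQ : Q.set jx (Enc.fin (jx + 1)) =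
      (P.take L).set jx (Enc.fin (jx + 1)) ++ Q.drop L := by
    conv_lhs => rw [← List.take_append_drop L Q]
    rw [List.set_append, if_pos (by rw [List.length_take]; omega), htake]
  set C := (P.take L).set jx (Enc.fin (jx + 1)) with hC
  have hClen : C.length = L := by
    rw [hC, List.length_set, List.length_take]; omega
  have hPjxV : P[jx]'(by omega) = Enc.inf := by
    have h0 := hPjx?
    rw [List.getElem?_eq_getElem (by omega : jx < P.length)] at h0
    exact Option.some_inj.mp h0
  have hCcount : C.count Enc.inf + 1 = (P.take L).count Enc.inf := by
    rw [hC]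
    have hjlt : jx < (P.take L).length := by rw [List.length_take]; omega
    apply count_set_inf _ _ _ hjlt
    rw [List.getElem_take]
    exact hPjxV
  have hlcp_new : lcp (penc (PSym.p a :: xs)) (penc (PSym.p b :: ys)) = L + 1 := by
    rw [hvx, hvy, hsplitP, hsplitQ, ← List.cons_append, ← List.cons_append, lcp_append]
    have h0 : lcp (P.drop L) (Q.drop L) = 0 := by rw [hLdef]; exact lcp_drop_lcp P Q
    rw [h0, List.length_cons, hClen]
  refine ⟨?_, hlcp_new, ?_⟩
  · rw [hvx, hvy, hsplitP, hsplitQ, ← List.cons_append, ← List.cons_append,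
      lexLt_append_iff]
    have := (lexLt_iff_drop P Q).1 hlt
    rwa [← hLdef] at this
  · rw [lcpInf, hlcp_new, hvx, hsplitP, ← List.cons_append]
    rw [show L + 1 = (Enc.inf :: C).length from by rw [List.length_cons, hClen]]
    rw [List.take_left, List.count_cons]
    simp only [beq_self_eq_true, if_true]
    omega
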